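/- Let V be a real ordered vector space (an ordered additive commutative group with an ℝ-module structure in which scalar multiplication by nonnegative reals is order preserving), and let g : Matrix (Fin d) (Fin d) ℂ → V be a map satisfying: (i) g(c • E) = c • g(E) for every real c ≥ 0 and every positive semidefinite E; (ii) g(E + F) ≤ g(E) + g(F) for all positive semidefinite E, F. If A is a measurement with n outcomes, B is a measurement with m outcomes, and A ⪯ B (A is a post-processing of B), then ∑ x, g(A x) ≤ ∑ y, g(B y). -/

import Mathlib

open Matrix
open scoped Kronecker ComplexOrder

noncomputable section

/-- A measurement (POVM): a finite family of positive semidefinite matrices summing to `1`. -/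
def IsMeasurement {ι κ : Type*} [Fintype ι] [DecidableEq ι] [Fintype κ]
    (A : κ → Matrix ι ι ℂ) : Prop :=
  (∀ x, (A x).PosSemidef) ∧ ∑ x, A x = 1

/-- `A` is a post-processing of `B`: `A ⪯ B`. -/
def PostProc {ι : Type*} {n m : ℕ}
    (A : Fin n → Matrix ι ι ℂ) (B : Fin m → Matrix ι ι ℂ) : Prop :=
  ∃ μ : Fin n → Fin m → ℝ,
    (∀ x y, 0 ≤ μ x y) ∧ (∀ y, ∑ x, μ x y = 1) ∧
    (∀ x, A x = ∑ y, (μ x y : ℂ) • B y)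

/-- The outer product `|E⟩⟨F|` of the vectorizations of two matrices. -/
def outerProd {ι : Type*} (E F : Matrix ι ι ℂ) : Matrix (ι × ι) (ι × ι) ℂ :=
  Matrix.of fun p q => E p.1 p.2 * star (F q.1 q.2)

/-- The square root of a positive semidefinite matrix, as defined in Mathlib (Dec 2024). -/
noncomputable def PosSemidef.sqrt {ι : Type*} [Fintype ι] [DecidableEq ι] {A : Matrix ι ι ℂ}
    (hA : A.PosSemidef) : Matrix ι ι ℂ :=
  hA.1.eigenvectorUnitary.1 * diagonal ((↑) ∘ (Real.sqrt ·) ∘ hA.1.eigenvalues) *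
    (star hA.1.eigenvectorUnitary : Matrix ι ι ℂ)

/-- The (un-normalized) Fisher information map of a measurement. -/
noncomputable def Fisher {ι κ : Type*} [Fintype ι] [Fintype κ]
    (A : κ → Matrix ι ι ℂ) : Matrix (ι × ι) (ι × ι) ℂ :=
  ∑ x, (Matrix.trace (A x))⁻¹ • outerProd (A x) (A x)

/-- The generalized Fisher information map of a measurement, relative to a
positive definite state `ρ` (with positive semidefinite square root `ρ^{1/2}`). -/
noncomputable def FisherRho {ι κ : Type*} [Fintype ι] [DecidableEq ι] [Fintype κ]
    {ρ : Matrix ι ι ℂ} (hρ : ρ.PosDef) (A : κ → Matrix ι ι ℂ) :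
    Matrix (ι × ι) (ι × ι) ℂ :=
  ∑ x, (Matrix.trace (ρ * A x))⁻¹ •
    outerProd (PosSemidef.sqrt hρ.posSemidef * A x) (PosSemidef.sqrt hρ.posSemidef * A x)

/-- The height of a finite family of self-adjoint matrices: the infimum of the traces of
Hermitian matrices dominating every member in the Loewner order. -/
noncomputable def height {ι κ : Type*} [Fintype ι] [Fintype κ]
    (X : κ → Matrix ι ι ℂ) : ℝ :=
  sInf { t : ℝ | ∃ H : Matrix ι ι ℂ, H.IsHermitian ∧
    (∀ i, (H - X i).PosSemidef) ∧ t = (Matrix.trace H).re }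
/-- The class `OrderedSMul` of Mathlib (Dec 2024), removed since. -/
class OrderedSMul (R M : Type*) [Zero R] [LT R] [LT M] [SMul R M] : Prop where
  protected smul_lt_smul_of_pos : ∀ {a b : M}, ∀ {c : R}, a < b → 0 < c → c • a < c • b
  protected lt_of_smul_lt_smul_of_pos : ∀ {a b : M}, ∀ {c : R}, c • a < c • b → 0 < c → a < b
lemma psd_smul' {d : ℕ} {E : Matrix (Fin d) (Fin d) ℂ} (hE : E.PosSemidef)
    {c : ℝ} (hc : 0 ≤ c) : ((c : ℂ) • E).PosSemidef := by
  constructor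
  · unfold Matrix.IsHermitian
    rw [Matrix.conjTranspose_smul, hE.1]
    simp
  · exact (hE.smul (a := (c : ℂ)) (by exact_mod_cast hc)).2

/-- An order morphism induces an order preserving map on measurements. -/
theorem stmt2 {V : Type*} [AddCommGroup V] [PartialOrder V] [IsOrderedAddMonoid V] [Module ℝ V] [OrderedSMul ℝ V]
    {d n m : ℕ} (g : Matrix (Fin d) (Fin d) ℂ → V)
    (h1 : ∀ (c : ℝ) (E : Matrix (Fin d) (Fin d) ℂ), 0 ≤ c → E.PosSemidef →
      g ((c : ℂ) • E) = c • g E)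
    (h2 : ∀ E F : Matrix (Fin d) (Fin d) ℂ, E.PosSemidef → F.PosSemidef →
      g (E + F) ≤ g E + g F)
    (A : Fin n → Matrix (Fin d) (Fin d) ℂ) (B : Fin m → Matrix (Fin d) (Fin d) ℂ)
    (hA : IsMeasurement A) (hB : IsMeasurement B) (hAB : PostProc A B) :
    ∑ x, g (A x) ≤ ∑ y, g (B y) := by
  obtain ⟨μ, hμ0, hμ1, hAB⟩ := hAB
  have hg0 : g 0 = 0 := by
    have := h1 0 0 le_rfl Matrix.PosSemidef.zero
    simpa using this
  have hsub : ∀ (s : Finset (Fin m)) (C : Fin m → Matrix (Fin d) (Fin d) ℂ),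
      (∀ y, (C y).PosSemidef) → g (∑ y ∈ s, C y) ≤ ∑ y ∈ s, g (C y) := by
    intro s C hC
    induction s using Finset.cons_induction with
    | empty => simp [hg0]
    | cons a s ha ih =>
      rw [Finset.sum_cons, Finset.sum_cons]
      calc g (C a + ∑ y ∈ s, C y) ≤ g (C a) + g (∑ y ∈ s, C y) :=
            h2 _ _ (hC a) (Finset.sum_induction C Matrix.PosSemidef (fun a b ha hb => ha.add hb) .zero (fun y _ => hC y))
        _ ≤ g (C a) + ∑ y ∈ s, g (C y) := by gcongr
  calc ∑ x, g (A x) ≤ ∑ x, ∑ y, (μ x y) • g (B y) := by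
        apply Finset.sum_le_sum
        intro x _
        rw [hAB x]
        refine le_trans (hsub Finset.univ _ ?_) ?_
        · intro y
          exact psd_smul' (hB.1 y) (hμ0 x y)
        · apply Finset.sum_le_sum
          intro y _
          rw [h1 (μ x y) (B y) (hμ0 x y) (hB.1 y)]
    _ = ∑ y, g (B y) := by
        rw [Finset.sum_comm]
        refine Finset.sum_congr rfl fun y _ => ?_
        rw [← Finset.sum_smul, hμ1 y, one_smul]
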